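/- arXiv:2010.07252 — 2 statements merged into one kernel-verified Lean document; each statement's English description precedes it below -/
import Mathlib

section
/- Let m ∈ ℝ^p, let d be a symmetric positive semidefinite p×p matrix, and for each i ∈ [K] suppose μ_i(m,d) = 0, σ_iσ_i^⊤(m,d) = −b_i(m,d), and f_i(m,d) = ∫_ℝ r_i(c_i^⊤m + (c_i^⊤ d c_i + ρ_i²)^{1/2} z) φ(z) dz, where c_i ∈ ℝ^p, ρ_i² > 0, φ(z) = (2π)^{−1/2}e^{−z²/2}, and r_i : ℝ → ℝ is twice continuously differentiable with r_i, r_i', r_i'' of at most polynomial growth (so the integrals converge and differentiation under the integral sign is valid). Then for every i ∈ [K] and λ > 0, L^λ_i(m,d) = (1/(2λ)) ⟨ ∑_{j,k=1}^K η^λ_{jk}(f(m,d)) (∂_m f_j(m,d)) (∂_m f_k(m,d))^⊤ ; σ_iσ_i^⊤(m,d) ⟩. -/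
open MeasureTheory
open Filter

noncomputable section

namespace ARC

variable {K p : ℕ}

/-- Standard Gaussian density. -/
def gauss (x : ℝ) : ℝ := (Real.sqrt (2 * Real.pi))⁻¹ * Real.exp (-x ^ 2 / 2)

/-- `ν^λ(a) = (∂_a S)(a/λ)`. -/
def nu (S : (Fin K → ℝ) → ℝ) (lam : ℝ) (a : Fin K → ℝ) : Fin K → ℝ :=
  fun j => fderiv ℝ S (lam⁻¹ • a) (Pi.single j 1)

/-- `η^λ(a) = (∂²_a S)(a/λ)`. -/
def eta (S : (Fin K → ℝ) → ℝ) (lam : ℝ) (a : Fin K → ℝ) : Fin K → Fin K → ℝ :=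
  fun j k => fderiv ℝ (fun x => fderiv ℝ S x (Pi.single k 1)) (lam⁻¹ • a) (Pi.single j 1)

/-- The maximum of a vector `a : Fin K → ℝ` (needs `0 < K`). -/
def fmax (hK : 0 < K) (a : Fin K → ℝ) : ℝ :=
  Finset.univ.sup' ⟨⟨0, hK⟩, Finset.mem_univ _⟩ a

/-- A smooth max approximator. -/
structure IsSmoothMax (hK : 0 < K) (S : (Fin K → ℝ) → ℝ) : Prop where
  smooth : ContDiff ℝ 3 S
  bddDeriv : ∃ C : ℝ, ∀ x, ∀ k ∈ ({1, 2, 3} : Finset ℕ), ‖iteratedFDeriv ℝ k S x‖ ≤ C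
  mono : Monotone S
  translate : ∀ (a : Fin K → ℝ) (c : ℝ), S (fun i => a i + c) = S a + c
  convex : ConvexOn ℝ Set.univ S
  approx : ∀ ε > (0 : ℝ), ∃ δ > (0 : ℝ), ∀ lam : ℝ, 0 < lam → lam < δ →
    ∀ a : Fin K → ℝ, |lam * S (lam⁻¹ • a) - fmax hK a| ≤ ε

/-- Partial gradient in `m` of `f_j` (matrix-valued `d`). -/
def gradMm (f : Fin K → (Fin p → ℝ) → (Fin p → Fin p → ℝ) → ℝ) (j : Fin K)
    (m : Fin p → ℝ) (d : Fin p → Fin p → ℝ) : Fin p → ℝ :=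
  fun k => fderiv ℝ (fun m' => f j m' d) m (Pi.single k 1)

/-- Partial gradient in the matrix variable `d` of `f_j`, as a `p × p` matrix. -/
def gradDm (f : Fin K → (Fin p → ℝ) → (Fin p → Fin p → ℝ) → ℝ) (j : Fin K)
    (m : Fin p → ℝ) (d : Fin p → Fin p → ℝ) : Fin p → Fin p → ℝ :=
  fun k l => fderiv ℝ (fun d' => f j m d') d (Pi.single k (Pi.single l 1))

/-- Hessian in `m` of `f_j`, as a `p × p` matrix (matrix-valued `d`). -/
def hessMm (f : Fin K → (Fin p → ℝ) → (Fin p → Fin p → ℝ) → ℝ) (j : Fin K)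
    (m : Fin p → ℝ) (d : Fin p → Fin p → ℝ) : Fin p → Fin p → ℝ :=
  fun k l =>
    fderiv ℝ (fun m' => fderiv ℝ (fun m'' => f j m'' d) m' (Pi.single l 1)) m (Pi.single k 1)

/-- The learning premium `L^λ(m,d) ∈ ℝ^K` in the case where the `d`-variable is a
`p × p` matrix, parametrised by the softmax `nuF` and its derivative `etaF`
(both already evaluated at scale `λ`), with `σσᵀ` supplied as `ssT`. -/
def Lmat (nuF : (Fin K → ℝ) → Fin K → ℝ) (etaF : (Fin K → ℝ) → Fin K → Fin K → ℝ)
    (lam : ℝ) (f : Fin K → (Fin p → ℝ) → (Fin p → Fin p → ℝ) → ℝ)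
    (μ : Fin K → (Fin p → ℝ) → (Fin p → Fin p → ℝ) → Fin p → ℝ)
    (b ssT : Fin K → (Fin p → ℝ) → (Fin p → Fin p → ℝ) → Fin p → Fin p → ℝ)
    (m : Fin p → ℝ) (d : Fin p → Fin p → ℝ) : Fin K → ℝ :=
  fun i =>
    (∑ k, ∑ l, (∑ j, nuF (fun j' => f j' m d) j * gradDm f j m d k l) * b i m d k l) +
    (∑ k, (∑ j, nuF (fun j' => f j' m d) j * gradMm f j m d k) * μ i m d k) +
    (1 / 2) * ∑ k, ∑ l,
      ((∑ j, nuF (fun j' => f j' m d) j * hessMm f j m d k l) +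
        lam⁻¹ * ∑ j, ∑ j', etaF (fun j'' => f j'' m d) j j' *
          gradMm f j m d k * gradMm f j' m d l) *
      ssT i m d k l

/-- Polynomial growth of `r` together with its first two derivatives. -/
def PolyGrowth2 (r : ℝ → ℝ) : Prop :=
  ∃ (C : ℝ) (n : ℕ), ∀ x : ℝ,
    |r x| ≤ C * (1 + |x|) ^ n ∧ |deriv r x| ≤ C * (1 + |x|) ^ n ∧
    |deriv (deriv r) x| ≤ C * (1 + |x|) ^ n

lemma gauss_pos (x : ℝ) : 0 < gauss x := by
  have : 0 < Real.sqrt (2 * Real.pi) := Real.sqrt_pos.2 (by positivity)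
  exact mul_pos (inv_pos.2 this) (Real.exp_pos _)

lemma gauss_continuous : Continuous gauss := by
  unfold gauss; fun_prop

lemma hasDerivAt_gauss (x : ℝ) : HasDerivAt gauss (-x * gauss x) x := by
  have h1 : HasDerivAt (fun x : ℝ => -x ^ 2 / 2) (-x) x := by
    have := ((hasDerivAt_pow 2 x).neg).div_const 2
    refine this.congr_deriv ?_; norm_num; ring
  have h2 := (h1.exp).const_mul (Real.sqrt (2 * Real.pi))⁻¹
  refine h2.congr_deriv ?_; unfold gauss; ring

lemma integrable_poly_gauss (n : ℕ) :
    Integrable (fun x : ℝ => (1 + |x|) ^ n * gauss x) := by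
  have key : ∀ k : ℕ, Integrable (fun x : ℝ => |x| ^ k * gauss x) := by
    intro k
    have h0 : Integrable (fun x : ℝ => x ^ (k:ℝ) * Real.exp (-(1/2) * x ^ 2)) :=
      integrable_rpow_mul_exp_neg_mul_sq (by norm_num)
        (lt_of_lt_of_le neg_one_lt_zero (Nat.cast_nonneg k))
    have h1 : Integrable (fun x : ℝ => x ^ k * gauss x) := by
      have h2 := h0.const_mul (Real.sqrt (2 * Real.pi))⁻¹
      apply h2.congr (Eventually.of_forall fun x => ?_)
      show (Real.sqrt (2 * Real.pi))⁻¹ * (x ^ (k:ℝ) * Real.exp (-(1/2) * x ^ 2)) = _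
      rw [Real.rpow_natCast]
      unfold gauss; ring_nf
    apply h1.abs.congr (Eventually.of_forall fun x => ?_)
    show |x ^ k * gauss x| = _
    rw [abs_mul, abs_pow, abs_of_pos (gauss_pos x)]
  have : (fun x : ℝ => (1 + |x|) ^ n * gauss x)
      = fun x => ∑ k ∈ Finset.range (n + 1), (n.choose k : ℝ) * (|x| ^ k * gauss x) := by
    funext x
    rw [add_comm, add_pow, Finset.sum_mul]
    refine Finset.sum_congr rfl fun k _ => by ring
  rw [this]
  exact integrable_finset_sum _ fun k _ => ((key k).const_mul _)

lemma tendsto_poly_gauss_atTop (n : ℕ) :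
    Tendsto (fun x : ℝ => (1 + |x|) ^ n * gauss x) atTop (nhds 0) := by
  have hb : ∀ᶠ x : ℝ in atTop, ‖(1 + |x|) ^ n * gauss x‖ ≤
      (Real.sqrt (2 * Real.pi))⁻¹ * (2 ^ n * (x ^ n * Real.exp (-x))) := by
    filter_upwards [eventually_ge_atTop (2 : ℝ)] with x hx
    have hx0 : (0:ℝ) ≤ x := by linarith
    have habs : |x| = x := abs_of_nonneg hx0
    have h1 : (1 + |x|) ^ n ≤ (2 * x) ^ n := by
      apply pow_le_pow_left₀ (by positivity)
      rw [habs]; linarith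
    have h2 : Real.exp (-x ^ 2 / 2) ≤ Real.exp (-x) := by
      apply Real.exp_le_exp.2; nlinarith
    have hgg : 0 < gauss x := gauss_pos x
    rw [Real.norm_eq_abs, abs_of_nonneg (by positivity)]
    unfold gauss
    calc (1 + |x|) ^ n * ((Real.sqrt (2 * Real.pi))⁻¹ * Real.exp (-x ^ 2 / 2))
        ≤ (2 * x) ^ n * ((Real.sqrt (2 * Real.pi))⁻¹ * Real.exp (-x)) := by
          exact mul_le_mul h1 (mul_le_mul_of_nonneg_left h2 (by positivity))
            (by positivity) (by positivity)
      _ = (Real.sqrt (2 * Real.pi))⁻¹ * (2 ^ n * (x ^ n * Real.exp (-x))) := by ring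
  have ht : Tendsto (fun x : ℝ => (Real.sqrt (2 * Real.pi))⁻¹ *
      (2 ^ n * (x ^ n * Real.exp (-x)))) atTop (nhds 0) := by
    have := (Real.tendsto_pow_mul_exp_neg_atTop_nhds_zero n).const_mul ((2:ℝ) ^ n)
    have := this.const_mul (Real.sqrt (2 * Real.pi))⁻¹
    simpa using this
  exact squeeze_zero_norm' hb ht

lemma tendsto_poly_gauss_atBot (n : ℕ) :
    Tendsto (fun x : ℝ => (1 + |x|) ^ n * gauss x) atBot (nhds 0) := by
  have : (fun x : ℝ => (1 + |x|) ^ n * gauss x)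
      = (fun x : ℝ => (1 + |x|) ^ n * gauss x) ∘ (fun x : ℝ => -x) := by
    funext x
    show (1 + |x|) ^ n * gauss x = (1 + |(-x)|) ^ n * gauss (-x)
    rw [abs_neg]; unfold gauss; rw [neg_sq]
  rw [this]
  exact (tendsto_poly_gauss_atTop n).comp tendsto_neg_atBot_atTop


section growth

variable {u : ℝ → ℝ} {C : ℝ} {n : ℕ}

lemma growth_nonneg (hb : ∀ x, |u x| ≤ C * (1 + |x|) ^ n) : 0 ≤ C := by
  have := (abs_nonneg (u 0)).trans (hb 0); simpa using this

lemma growth_comp (hb : ∀ x, |u x| ≤ C * (1 + |x|) ^ n) {A S a s : ℝ}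
    (hA : |a| ≤ A) (hS : |s| ≤ S) (x : ℝ) :
    |u (a + s * x)| ≤ C * (1 + A + S) ^ n * (1 + |x|) ^ n := by
  have hC := growth_nonneg hb
  have h1 : 1 + |a + s * x| ≤ (1 + A + S) * (1 + |x|) := by
    have h2 : |a + s * x| ≤ |a| + |s| * |x| := by
      refine (abs_add_le _ _).trans ?_; rw [abs_mul]
    have hx := abs_nonneg x
    have hs := abs_nonneg s
    have ha := abs_nonneg a
    nlinarith
  calc |u (a + s * x)| ≤ C * (1 + |a + s * x|) ^ n := hb _
    _ ≤ C * ((1 + A + S) * (1 + |x|)) ^ n := by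
        exact mul_le_mul_of_nonneg_left (pow_le_pow_left₀ (by positivity) h1 n) hC
    _ = C * (1 + A + S) ^ n * (1 + |x|) ^ n := by rw [mul_pow]; ring

lemma integrable_growth_gauss (hu : Continuous u) (hb : ∀ x, |u x| ≤ C * (1 + |x|) ^ n) :
    Integrable (fun x => u x * gauss x) := by
  apply Integrable.mono' ((integrable_poly_gauss n).const_mul C)
  · exact (hu.mul gauss_continuous).aestronglyMeasurable
  · refine Eventually.of_forall fun x => ?_
    rw [Real.norm_eq_abs, abs_mul, abs_of_pos (gauss_pos x), ← mul_assoc]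
    exact mul_le_mul_of_nonneg_right (hb x) (gauss_pos x).le

lemma integrable_growth_mul_gauss (hu : Continuous u)
    (hb : ∀ x, |u x| ≤ C * (1 + |x|) ^ n) :
    Integrable (fun x => u x * x * gauss x) := by
  apply Integrable.mono' ((integrable_poly_gauss (n + 1)).const_mul C)
  · exact ((hu.mul continuous_id).mul gauss_continuous).aestronglyMeasurable
  · refine Eventually.of_forall fun x => ?_
    have hC := growth_nonneg hb
    rw [Real.norm_eq_abs, abs_mul, abs_of_pos (gauss_pos x), abs_mul, ← mul_assoc]
    have h1 : |u x| * |x| ≤ C * (1 + |x|) ^ (n + 1) := by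
      calc |u x| * |x| ≤ (C * (1 + |x|) ^ n) * (1 + |x|) := by
            exact mul_le_mul (hb x) (by linarith [abs_nonneg x]) (abs_nonneg x)
              (by positivity)
        _ = C * (1 + |x|) ^ (n + 1) := by ring
    exact mul_le_mul_of_nonneg_right h1 (gauss_pos x).le

lemma integrable_growth_comp_gauss (hu : Continuous u)
    (hb : ∀ x, |u x| ≤ C * (1 + |x|) ^ n) (a s : ℝ) :
    Integrable (fun x => u (a + s * x) * gauss x) := by
  have hb2 : ∀ x, |u (a + s * x)| ≤ (C * (1 + |a| + |s|) ^ n) * (1 + |x|) ^ n := by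
    intro x
    have := growth_comp hb (le_refl |a|) (le_refl |s|) x
    linarith
  exact integrable_growth_gauss (by continuity) hb2

lemma integrable_growth_comp_mul_gauss (hu : Continuous u)
    (hb : ∀ x, |u x| ≤ C * (1 + |x|) ^ n) (a s : ℝ) :
    Integrable (fun x => u (a + s * x) * x * gauss x) := by
  have hb2 : ∀ x, |u (a + s * x)| ≤ (C * (1 + |a| + |s|) ^ n) * (1 + |x|) ^ n := by
    intro x
    have := growth_comp hb (le_refl |a|) (le_refl |s|) x
    linarith
  exact integrable_growth_mul_gauss (by continuity) hb2

end growth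

section dct

variable {u u' : ℝ → ℝ} {C : ℝ} {n : ℕ}

lemma hasDerivAt_gaussInt_a (hu : Continuous u) (hu' : Continuous u')
    (hd : ∀ y, HasDerivAt u (u' y) y)
    (hb : ∀ x, |u x| ≤ C * (1 + |x|) ^ n) (hb' : ∀ x, |u' x| ≤ C * (1 + |x|) ^ n)
    (s a₀ : ℝ) :
    HasDerivAt (fun a => ∫ x : ℝ, u (a + s * x) * gauss x)
      (∫ x : ℝ, u' (a₀ + s * x) * gauss x) a₀ := by
  have H := hasDerivAt_integral_of_dominated_loc_of_deriv_le (μ := volume) (x₀ := a₀)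
    (s := Metric.ball a₀ 1) (F := fun a x => u (a + s * x) * gauss x)
    (F' := fun a x => u' (a + s * x) * gauss x)
    (bound := fun x => (C * (1 + (|a₀| + 1) + |s|) ^ n) * ((1 + |x|) ^ n * gauss x))
    (Metric.ball_mem_nhds a₀ one_pos)
    (Eventually.of_forall fun a =>
      ((hu.comp (by continuity)).mul gauss_continuous).aestronglyMeasurable)
    (integrable_growth_comp_gauss hu hb a₀ s)
    ((hu'.comp (by continuity)).mul gauss_continuous).aestronglyMeasurable
    (Eventually.of_forall fun x => fun a ha => ?_)
    (((integrable_poly_gauss n).const_mul _))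
    (Eventually.of_forall fun x => fun a _ => ?_)
  · exact H.2
  · have hA : |a| ≤ |a₀| + 1 := by
      have h3 : |a - a₀| < 1 := by simpa [Real.dist_eq] using Metric.mem_ball.mp ha
      have := abs_sub_abs_le_abs_sub a a₀
      linarith
    have hgb := growth_comp hb' hA (le_refl |s|) x
    rw [Real.norm_eq_abs, abs_mul, abs_of_pos (gauss_pos x)]
    calc |u' (a + s * x)| * gauss x
        ≤ (C * (1 + (|a₀| + 1) + |s|) ^ n * (1 + |x|) ^ n) * gauss x :=
          mul_le_mul_of_nonneg_right hgb (gauss_pos x).le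
      _ = (C * (1 + (|a₀| + 1) + |s|) ^ n) * ((1 + |x|) ^ n * gauss x) := by ring
  · have h1 : HasDerivAt (fun a : ℝ => a + s * x) 1 a := (hasDerivAt_id a).add_const _
    have h2 := (hd (a + s * x)).comp a h1
    simpa using h2.mul_const (gauss x)

lemma hasDerivAt_gaussInt_s (hu : Continuous u) (hu' : Continuous u')
    (hd : ∀ y, HasDerivAt u (u' y) y)
    (hb : ∀ x, |u x| ≤ C * (1 + |x|) ^ n) (hb' : ∀ x, |u' x| ≤ C * (1 + |x|) ^ n)
    (a s₀ : ℝ) :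
    HasDerivAt (fun s => ∫ x : ℝ, u (a + s * x) * gauss x)
      (∫ x : ℝ, u' (a + s₀ * x) * x * gauss x) s₀ := by
  have H := hasDerivAt_integral_of_dominated_loc_of_deriv_le (μ := volume) (x₀ := s₀)
    (s := Metric.ball s₀ 1) (F := fun s x => u (a + s * x) * gauss x)
    (F' := fun s x => u' (a + s * x) * x * gauss x)
    (bound := fun x => (C * (1 + |a| + (|s₀| + 1)) ^ n) * ((1 + |x|) ^ (n + 1) * gauss x))
    (Metric.ball_mem_nhds s₀ one_pos)
    (Eventually.of_forall fun s =>
      ((hu.comp (by continuity)).mul gauss_continuous).aestronglyMeasurable)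
    (integrable_growth_comp_gauss hu hb a s₀)
    (((hu'.comp (by continuity)).mul continuous_id).mul gauss_continuous).aestronglyMeasurable
    (Eventually.of_forall fun x => fun s hs => ?_)
    (((integrable_poly_gauss (n + 1)).const_mul _))
    (Eventually.of_forall fun x => fun s _ => ?_)
  · exact H.2
  · have hgb : |u' (a + s * x)| ≤ C * (1 + |a| + (|s₀| + 1)) ^ n * (1 + |x|) ^ n := by
      refine growth_comp hb' (le_refl |a|) ?_ x
      have h3 : |s - s₀| < 1 := by simpa [Real.dist_eq] using Metric.mem_ball.mp hs
      have := abs_sub_abs_le_abs_sub s s₀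
      linarith
    have hC : (0:ℝ) ≤ C := growth_nonneg hb'
    rw [Real.norm_eq_abs, abs_mul, abs_of_pos (gauss_pos x), abs_mul]
    calc |u' (a + s * x)| * |x| * gauss x
        ≤ ((C * (1 + |a| + (|s₀| + 1)) ^ n * (1 + |x|) ^ n) * (1 + |x|)) * gauss x := by
          refine mul_le_mul_of_nonneg_right ?_ (gauss_pos x).le
          exact mul_le_mul hgb (by linarith [abs_nonneg x]) (abs_nonneg x) (by positivity)
      _ = (C * (1 + |a| + (|s₀| + 1)) ^ n) * ((1 + |x|) ^ (n + 1) * gauss x) := by ring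
  · have h1 : HasDerivAt (fun s : ℝ => a + s * x) x s := by
      simpa using ((hasDerivAt_id s).mul_const x).const_add a
    have h2 := (hd (a + s * x)).comp s h1
    simpa [mul_assoc] using h2.mul_const (gauss x)

lemma gauss_ibp {g g' : ℝ → ℝ} (hg : Continuous g) (hg' : Continuous g')
    (hd : ∀ y, HasDerivAt g (g' y) y) {C : ℝ} {n : ℕ}
    (hb : ∀ x, |g x| ≤ C * (1 + |x|) ^ n) (hb' : ∀ x, |g' x| ≤ C * (1 + |x|) ^ n) :
    ∫ x : ℝ, g x * x * gauss x = ∫ x : ℝ, g' x * gauss x := by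
  have hC := growth_nonneg hb
  have hderiv : ∀ x, HasDerivAt (fun y => g y * gauss y)
      (g' x * gauss x - g x * x * gauss x) x := by
    intro x
    have h := (hd x).mul (hasDerivAt_gauss x)
    refine h.congr_deriv ?_; ring
  have int1 : Integrable (fun x => g' x * gauss x) := integrable_growth_gauss hg' hb'
  have int2 : Integrable (fun x => g x * x * gauss x) := integrable_growth_mul_gauss hg hb
  have intd : Integrable (fun x => g' x * gauss x - g x * x * gauss x) := by
    exact int1.sub int2
  have hnorm : ∀ x : ℝ, ‖g x * gauss x‖ ≤ C * ((1 + |x|) ^ n * gauss x) := by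
    intro x
    rw [Real.norm_eq_abs, abs_mul, abs_of_pos (gauss_pos x), ← mul_assoc]
    exact mul_le_mul_of_nonneg_right (hb x) (gauss_pos x).le
  have hTt : Tendsto (fun x : ℝ => C * ((1 + |x|) ^ n * gauss x)) atTop (nhds 0) := by
    simpa using (tendsto_poly_gauss_atTop n).const_mul C
  have hTb : Tendsto (fun x : ℝ => C * ((1 + |x|) ^ n * gauss x)) atBot (nhds 0) := by
    simpa using (tendsto_poly_gauss_atBot n).const_mul C
  have T1 : Tendsto (fun y => g y * gauss y) atTop (nhds 0) := squeeze_zero_norm hnorm hTt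
  have T2 : Tendsto (fun y => g y * gauss y) atBot (nhds 0) := squeeze_zero_norm hnorm hTb
  have e1 := integral_Iic_of_hasDerivAt_of_tendsto' (a := 0)
    (fun x _ => hderiv x) intd.integrableOn T2
  have e2 := integral_Ioi_of_hasDerivAt_of_tendsto' (a := 0)
    (fun x _ => hderiv x) intd.integrableOn T1
  have e3 : ∫ x : ℝ, (g' x * gauss x - g x * x * gauss x) = 0 := by
    rw [← intervalIntegral.integral_Iic_add_Ioi intd.integrableOn intd.integrableOn, e1, e2]; ring
  rw [integral_sub int1 int2] at e3
  linarith

end dct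

lemma mul_sum2 {ι κ : Type*} (s : Finset ι) (t : Finset κ) (cc : ℝ) (G : ι → κ → ℝ) :
    cc * ∑ k ∈ s, ∑ l ∈ t, G k l = ∑ k ∈ s, ∑ l ∈ t, cc * G k l := by
  rw [Finset.mul_sum]
  exact Finset.sum_congr rfl fun k _ => Finset.mul_sum _ _ _

lemma gradD_eq_half_hess {p : ℕ} (r : ℝ → ℝ) (hr : ContDiff ℝ 2 r)
    {C : ℝ} {n : ℕ}
    (hb0 : ∀ x, |r x| ≤ C * (1 + |x|) ^ n)
    (hb1 : ∀ x, |deriv r x| ≤ C * (1 + |x|) ^ n)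
    (hb2 : ∀ x, |deriv (deriv r) x| ≤ C * (1 + |x|) ^ n)
    (cv : Fin p → ℝ) (ρ : ℝ) (m : Fin p → ℝ) (d : Fin p → Fin p → ℝ)
    (ht : 0 < (∑ u, ∑ v, cv u * d u v * cv v) + ρ) (k l : Fin p) :
    fderiv ℝ (fun d' : Fin p → Fin p → ℝ => ∫ x : ℝ,
        r ((∑ u, cv u * m u) + Real.sqrt ((∑ u, ∑ v, cv u * d' u v * cv v) + ρ) * x)
          * gauss x) d (Pi.single k (Pi.single l 1)) =
      (1 / 2) * fderiv ℝ (fun m' : Fin p → ℝ =>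
        fderiv ℝ (fun m'' : Fin p → ℝ => ∫ x : ℝ,
            r ((∑ u, cv u * m'' u) + Real.sqrt ((∑ u, ∑ v, cv u * d u v * cv v) + ρ) * x)
              * gauss x) m' (Pi.single l 1)) m (Pi.single k 1) := by
  classical
  have hrc : Continuous r := hr.continuous
  have hrd : Differentiable ℝ r := hr.differentiable (by norm_num)
  have hr1 : ContDiff ℝ 1 (deriv r) := by
    have h2 : ContDiff ℝ (1 + 1) r := by exact_mod_cast hr
    exact (contDiff_succ_iff_deriv.mp h2).2.2
  have hrdc : Continuous (deriv r) := hr1.continuous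
  have hrd1 : Differentiable ℝ (deriv r) := hr1.differentiable (by norm_num)
  have hrddc : Continuous (deriv (deriv r)) := (contDiff_one_iff_deriv.mp hr1).2
  have hd0 : ∀ y, HasDerivAt r (deriv r y) y := fun y => (hrd y).hasDerivAt
  have hd1 : ∀ y, HasDerivAt (deriv r) (deriv (deriv r) y) y := fun y => (hrd1 y).hasDerivAt
  have hC : 0 ≤ C := growth_nonneg hb0
  set a₀ : ℝ := ∑ u, cv u * m u with ha₀
  set q₀ : ℝ := ∑ u, ∑ v, cv u * d u v * cv v with hq₀
  set s₀ : ℝ := Real.sqrt (q₀ + ρ) with hs₀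
  have hs : 0 < s₀ := Real.sqrt_pos.2 ht
  have hs0 : s₀ ≠ 0 := ne_of_gt hs
  -- linear maps
  set Lc : (Fin p → ℝ) →L[ℝ] ℝ := ∑ u, cv u • (ContinuousLinearMap.proj u) with hLcdef
  have hLc : ∀ m' : Fin p → ℝ, Lc m' = ∑ u, cv u * m' u := by
    intro m'
    simp [hLcdef, ContinuousLinearMap.sum_apply, ContinuousLinearMap.smul_apply,
      ContinuousLinearMap.proj_apply, smul_eq_mul]
  have hLcm : Lc m = a₀ := by rw [hLc, ha₀]
  have hLck : ∀ w : Fin p, Lc (Pi.single w 1) = cv w := by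
    intro w; rw [hLc]
    simp [Pi.single_apply]
  set Qc : (Fin p → Fin p → ℝ) →L[ℝ] ℝ := ∑ u, ∑ v, (cv u * cv v) •
      ((ContinuousLinearMap.proj v : (Fin p → ℝ) →L[ℝ] ℝ).comp
        (ContinuousLinearMap.proj u : (Fin p → Fin p → ℝ) →L[ℝ] (Fin p → ℝ))) with hQcdef
  have hQc : ∀ d' : Fin p → Fin p → ℝ, Qc d' = ∑ u, ∑ v, cv u * d' u v * cv v := by
    intro d'
    simp only [hQcdef, ContinuousLinearMap.coe_sum', Finset.sum_apply,
      ContinuousLinearMap.smul_apply, ContinuousLinearMap.coe_comp', Function.comp_apply,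
      ContinuousLinearMap.proj_apply, smul_eq_mul]
    exact Finset.sum_congr rfl fun u _ => Finset.sum_congr rfl fun v _ => by ring
  have hQkl : Qc (Pi.single k (Pi.single l 1)) = cv k * cv l := by
    rw [hQc]
    have hsingle : ∀ u v : Fin p, (Pi.single k (Pi.single l 1) : Fin p → Fin p → ℝ) u v
        = (if u = k then 1 else 0) * (if v = l then 1 else 0) := by
      intro u v
      by_cases hu : u = k <;> by_cases hv : v = l <;>
        simp [Pi.single_apply, hu, hv]
    simp only [hsingle]
    rw [Finset.sum_comm]
    simp [Finset.sum_ite_eq', mul_ite, ite_mul]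
  -- derivative facts
  have hΦ1 : ∀ aa : ℝ, HasDerivAt (fun a => ∫ x : ℝ, r (a + s₀ * x) * gauss x)
      (∫ x : ℝ, deriv r (aa + s₀ * x) * gauss x) aa :=
    fun aa => hasDerivAt_gaussInt_a hrc hrdc hd0 hb0 hb1 s₀ aa
  have hΦ2 : ∀ aa : ℝ, HasDerivAt (fun a => ∫ x : ℝ, deriv r (a + s₀ * x) * gauss x)
      (∫ x : ℝ, deriv (deriv r) (aa + s₀ * x) * gauss x) aa :=
    fun aa => hasDerivAt_gaussInt_a hrdc hrddc hd1 hb1 hb2 s₀ aa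
  -- inner m-derivative
  have hinner : ∀ m' : Fin p → ℝ,
      fderiv ℝ (fun m'' : Fin p → ℝ => ∫ x : ℝ, r ((∑ u, cv u * m'' u) + s₀ * x) * gauss x)
        m' (Pi.single l 1)
      = cv l * ((fun a => ∫ x : ℝ, deriv r (a + s₀ * x) * gauss x) (Lc m')) := by
    intro m'
    have hcomp : (fun m'' : Fin p → ℝ => ∫ x : ℝ, r ((∑ u, cv u * m'' u) + s₀ * x) * gauss x)
        = (fun a => ∫ x : ℝ, r (a + s₀ * x) * gauss x) ∘ ⇑Lc := by
      funext m''; simp only [Function.comp_apply, hLc]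
    rw [hcomp, ((hΦ1 (Lc m')).comp_hasFDerivAt m' Lc.hasFDerivAt).fderiv]
    simp only [ContinuousLinearMap.smul_apply, smul_eq_mul, hLck l]
    ring
  -- RHS: Hessian entry
  have hRHS : fderiv ℝ (fun m' : Fin p → ℝ =>
      fderiv ℝ (fun m'' : Fin p → ℝ => ∫ x : ℝ, r ((∑ u, cv u * m'' u) + s₀ * x) * gauss x)
        m' (Pi.single l 1)) m (Pi.single k 1)
      = cv l * ((∫ x : ℝ, deriv (deriv r) (a₀ + s₀ * x) * gauss x) * cv k) := by
    have hfun : (fun m' : Fin p → ℝ =>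
        fderiv ℝ (fun m'' : Fin p → ℝ => ∫ x : ℝ, r ((∑ u, cv u * m'' u) + s₀ * x) * gauss x)
          m' (Pi.single l 1))
        = fun m' => cv l * ((fun a => ∫ x : ℝ, deriv r (a + s₀ * x) * gauss x) (Lc m')) :=
      funext fun m' => hinner m'
    rw [hfun]
    have h2 : HasFDerivAt (fun m' : Fin p → ℝ =>
        cv l * ((fun a => ∫ x : ℝ, deriv r (a + s₀ * x) * gauss x) (Lc m')))
        (cv l • ((∫ x : ℝ, deriv (deriv r) (Lc m + s₀ * x) * gauss x) • Lc)) m :=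
      (((hΦ2 (Lc m)).comp_hasFDerivAt m Lc.hasFDerivAt)).const_mul (cv l)
    rw [h2.fderiv]
    rw [hLcm] at *
    simp only [ContinuousLinearMap.smul_apply, smul_eq_mul, hLck k]
  -- LHS: d-derivative
  have hΦs : HasDerivAt (fun σ : ℝ => ∫ x : ℝ, r (a₀ + σ * x) * gauss x)
      (∫ x : ℝ, deriv r (a₀ + s₀ * x) * x * gauss x) s₀ :=
    hasDerivAt_gaussInt_s hrc hrdc hd0 hb0 hb1 a₀ s₀
  have hsq : HasDerivAt (fun v : ℝ => Real.sqrt (v + ρ)) (1 / (2 * s₀)) q₀ := by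
    have h1 : HasDerivAt (fun v : ℝ => v + ρ) 1 q₀ := (hasDerivAt_id q₀).add_const ρ
    have h2 := (Real.hasDerivAt_sqrt (ne_of_gt ht)).comp q₀ h1
    refine h2.congr_deriv ?_; simp [← hs₀]
  have hv : HasDerivAt (fun v : ℝ => ∫ x : ℝ, r (a₀ + Real.sqrt (v + ρ) * x) * gauss x)
      ((∫ x : ℝ, deriv r (a₀ + s₀ * x) * x * gauss x) * (1 / (2 * s₀))) q₀ := by
    have h3 := hΦs.comp q₀ hsq
    exact h3
  have hIBP : (∫ x : ℝ, deriv r (a₀ + s₀ * x) * x * gauss x)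
      = s₀ * ∫ x : ℝ, deriv (deriv r) (a₀ + s₀ * x) * gauss x := by
    have hdg : ∀ y : ℝ, HasDerivAt (fun x => deriv r (a₀ + s₀ * x))
        (s₀ * deriv (deriv r) (a₀ + s₀ * y)) y := by
      intro y
      have h1 : HasDerivAt (fun x : ℝ => a₀ + s₀ * x) s₀ y := by
        simpa using ((hasDerivAt_id y).const_mul s₀).const_add a₀
      have h4 := (hd1 (a₀ + s₀ * y)).comp y h1
      refine h4.congr_deriv ?_; ring
    have hD1 : ∀ x, |deriv r (a₀ + s₀ * x)|
        ≤ (C * (1 + |a₀| + |s₀|) ^ n * (1 + |s₀|)) * (1 + |x|) ^ n := by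
      intro x
      have h5 := growth_comp hb1 (le_refl |a₀|) (le_refl |s₀|) x
      have h6 : C * (1 + |a₀| + |s₀|) ^ n * (1 + |x|) ^ n
          ≤ (C * (1 + |a₀| + |s₀|) ^ n * (1 + |s₀|)) * (1 + |x|) ^ n := by
        have hpos : (0:ℝ) ≤ C * (1 + |a₀| + |s₀|) ^ n * (1 + |x|) ^ n := by positivity
        nlinarith [abs_nonneg s₀]
      linarith
    have hD2 : ∀ x, |s₀ * deriv (deriv r) (a₀ + s₀ * x)|
        ≤ (C * (1 + |a₀| + |s₀|) ^ n * (1 + |s₀|)) * (1 + |x|) ^ n := by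
      intro x
      rw [abs_mul]
      have h5 := growth_comp hb2 (le_refl |a₀|) (le_refl |s₀|) x
      have h7 : |s₀| * |deriv (deriv r) (a₀ + s₀ * x)|
          ≤ (1 + |s₀|) * (C * (1 + |a₀| + |s₀|) ^ n * (1 + |x|) ^ n) := by
        apply mul_le_mul (by linarith [abs_nonneg s₀]) h5 (abs_nonneg _)
          (by linarith [abs_nonneg s₀])
      calc |s₀| * |deriv (deriv r) (a₀ + s₀ * x)|
          ≤ (1 + |s₀|) * (C * (1 + |a₀| + |s₀|) ^ n * (1 + |x|) ^ n) := h7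
        _ = (C * (1 + |a₀| + |s₀|) ^ n * (1 + |s₀|)) * (1 + |x|) ^ n := by ring
    have hlin : Continuous (fun x : ℝ => a₀ + s₀ * x) :=
      continuous_const.add (continuous_const.mul continuous_id)
    have h := gauss_ibp (g := fun x => deriv r (a₀ + s₀ * x))
      (g' := fun x => s₀ * deriv (deriv r) (a₀ + s₀ * x))
      (hrdc.comp hlin) (continuous_const.mul (hrddc.comp hlin)) hdg hD1 hD2
    rw [h]
    simp_rw [mul_assoc]
    rw [MeasureTheory.integral_const_mul]
  have hLHScomp : (fun d' : Fin p → Fin p → ℝ => ∫ x : ℝ,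
      r (a₀ + Real.sqrt ((∑ u, ∑ v, cv u * d' u v * cv v) + ρ) * x) * gauss x)
      = (fun v : ℝ => ∫ x : ℝ, r (a₀ + Real.sqrt (v + ρ) * x) * gauss x) ∘ ⇑Qc := by
    funext d'; simp only [Function.comp_apply, hQc]
  have hQcd : q₀ = Qc d := by rw [hQc, hq₀]
  have hL : fderiv ℝ (fun d' : Fin p → Fin p → ℝ => ∫ x : ℝ,
      r (a₀ + Real.sqrt ((∑ u, ∑ v, cv u * d' u v * cv v) + ρ) * x) * gauss x)
      d (Pi.single k (Pi.single l 1))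
      = ((∫ x : ℝ, deriv r (a₀ + s₀ * x) * x * gauss x) * (1 / (2 * s₀))) * (cv k * cv l) := by
    rw [hLHScomp]
    have h3 := hv.comp_hasFDerivAt_of_eq d Qc.hasFDerivAt hQcd
    rw [h3.fderiv]
    simp only [ContinuousLinearMap.smul_apply, smul_eq_mul, hQkl]
  rw [hL, hRHS, hIBP]
  field_simp

end ARC
/-- Lemma A.4: if `μ_i(m,d) = 0`, `σ_iσ_i^⊤(m,d) = -b_i(m,d)` and
`f_i(m,d) = ∫ r_i(c_i^⊤ m + (c_i^⊤ d c_i + ρ_i²)^{1/2} z) φ(z) dz`, then the learning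
premium reduces to the single `η`-term:
`L^λ_i(m,d) = (2λ)⁻¹ ⟨∑_{j,k} η^λ_{jk}(f)(∂_m f_j)(∂_m f_k)^⊤ ; σ_iσ_i^⊤⟩`. -/
theorem ARC.L_gaussian_reduction
    {K p : ℕ} (hK : 0 < K) (hp : 0 < p)
    (S : (Fin K → ℝ) → ℝ) (hS : ARC.IsSmoothMax hK S)
    (m : Fin p → ℝ) (d : Fin p → Fin p → ℝ)
    (hdsym : ∀ k l, d k l = d l k)
    (hdpsd : ∀ v : Fin p → ℝ, 0 ≤ ∑ k, ∑ l, v k * d k l * v l)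
    (c : Fin K → Fin p → ℝ) (ρsq : Fin K → ℝ) (hρ : ∀ i, 0 < ρsq i)
    (rf : Fin K → ℝ → ℝ) (hrf : ∀ i, ContDiff ℝ 2 (rf i))
    (hgrowth : ∀ i, ARC.PolyGrowth2 (rf i))
    (f : Fin K → (Fin p → ℝ) → (Fin p → Fin p → ℝ) → ℝ)
    (hfdef : f = fun i m' d' => ∫ x : ℝ,
      rf i ((∑ k, c i k * m' k) +
        Real.sqrt ((∑ k, ∑ l, c i k * d' k l * c i l) + ρsq i) * x) * ARC.gauss x)
    (μ : Fin K → (Fin p → ℝ) → (Fin p → Fin p → ℝ) → Fin p → ℝ)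
    (b ssT : Fin K → (Fin p → ℝ) → (Fin p → Fin p → ℝ) → Fin p → Fin p → ℝ)
    (hμ : ∀ i, μ i m d = 0)
    (hssT : ∀ i k l, ssT i m d k l = -(b i m d k l)) :
    ∀ (i : Fin K) (lam : ℝ), 0 < lam →
      ARC.Lmat (ARC.nu S lam) (ARC.eta S lam) lam f μ b ssT m d i =
        (1 / (2 * lam)) * ∑ k, ∑ l,
          (∑ j, ∑ j', ARC.eta S lam (fun j'' => f j'' m d) j j' *
            ARC.gradMm f j m d k * ARC.gradMm f j' m d l) * ssT i m d k l := by
  intro i lam hlam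
  have hlam0 : lam ≠ 0 := ne_of_gt hlam
  have key : ∀ (j : Fin K) (k l : Fin p),
      ARC.gradDm f j m d k l = (1 / 2) * ARC.hessMm f j m d k l := by
    intro j k l
    obtain ⟨C, n, hCn⟩ := hgrowth j
    have ht : 0 < (∑ u, ∑ v, c j u * d u v * c j v) + ρsq j := by
      have h1 := hdpsd (c j)
      have h2 := hρ j
      linarith
    simp only [ARC.gradDm, ARC.hessMm, hfdef]
    exact ARC.gradD_eq_half_hess (rf j) (hrf j) (fun x => (hCn x).1)
      (fun x => (hCn x).2.1) (fun x => (hCn x).2.2) (c j) (ρsq j) m d ht k l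
  have hbb : ∀ k l, b i m d k l = -(ssT i m d k l) := fun k l => by rw [hssT]; ring
  have hT2 : (∑ k, (∑ j, ARC.nu S lam (fun j' => f j' m d) j * ARC.gradMm f j m d k)
      * μ i m d k) = 0 :=
    Finset.sum_eq_zero fun k _ => by rw [hμ i]; simp
  simp only [ARC.Lmat]
  rw [hT2, add_zero]
  rw [ARC.mul_sum2 _ _ (1 / 2), ARC.mul_sum2 _ _ (1 / (2 * lam)), ← Finset.sum_add_distrib]
  refine Finset.sum_congr rfl fun k _ => ?_
  rw [← Finset.sum_add_distrib]
  refine Finset.sum_congr rfl fun l _ => ?_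
  have e1 : (∑ j, ARC.nu S lam (fun j' => f j' m d) j * ARC.gradDm f j m d k l)
      = (1 / 2) * ∑ j, ARC.nu S lam (fun j' => f j' m d) j * ARC.hessMm f j m d k l := by
    rw [Finset.mul_sum]
    exact Finset.sum_congr rfl fun j _ => by rw [key j k l]; ring
  rw [e1, hbb k l]
  field_simp
  ring
end
end

section
/- In the Gaussian bandit with additional information, for every i ∈ [K] and λ > 0, L^λ_i(m,d) = (1/(2λ)) ∑_{j=1}^K η^λ_{jj}(f(m,d)) d_{jj}² (s_{ij}/(1 + d_{jj}s_{ij})) g_j(m,d)², where g_j(m,d) := ∫_ℝ r_j'(m_j + (d_{jj} + s_{jj}^{−1})^{1/2} z) φ(z) dz. -/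
open MeasureTheory

noncomputable section

section
open Real Filter Set MeasureTheory Topology
namespace ARCAux

open Real Filter Set MeasureTheory Topology

/-- polynomial growth bound -/
def PG (C : ℝ) (n : ℕ) (q : ℝ → ℝ) : Prop := ∀ x, |q x| ≤ C * (1 + |x|) ^ n

lemma PG.nonnegC {q : ℝ → ℝ} {C : ℝ} {n : ℕ} (h : PG C n q) : 0 ≤ C := by
  have h0 := h 0
  simp at h0
  exact le_trans (abs_nonneg _) h0

lemma gauss_nonneg (x : ℝ) : 0 ≤ ARC.gauss x :=
  mul_nonneg (inv_nonneg.2 (Real.sqrt_nonneg _)) (Real.exp_nonneg _)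

lemma gauss_eq (x : ℝ) : ARC.gauss x = (Real.sqrt (2 * Real.pi))⁻¹ * Real.exp (-(1/2) * x ^ 2) := by
  unfold ARC.gauss; ring_nf

lemma continuous_gauss : Continuous ARC.gauss := by
  unfold ARC.gauss
  exact continuous_const.mul (((continuous_pow 2).neg.div_const 2).rexp)

lemma hasDerivAt_gauss (x : ℝ) : HasDerivAt ARC.gauss (-x * ARC.gauss x) x := by
  unfold ARC.gauss
  have h1 : HasDerivAt (fun x : ℝ => -x ^ 2 / 2) (-x) x := by
    have := ((hasDerivAt_pow 2 x).neg.div_const 2)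
    simpa using this.congr_deriv (by ring)
  have := (h1.exp.const_mul ((Real.sqrt (2 * Real.pi))⁻¹))
  refine this.congr_deriv ?_
  ring

lemma integrable_abs_pow_gauss (k : ℕ) :
    Integrable (fun x : ℝ => |x| ^ k * Real.exp (-(1/2) * x ^ 2)) := by
  have h := integrable_rpow_mul_exp_neg_mul_sq (b := 1/2) (by norm_num)
    (s := (k : ℝ)) (neg_one_lt_zero.trans_le (Nat.cast_nonneg k))
  simp only [Real.rpow_natCast] at h
  refine h.abs.congr (Filter.Eventually.of_forall fun x => ?_)
  show |x ^ k * Real.exp (-(1/2) * x ^ 2)| = |x| ^ k * Real.exp (-(1/2) * x ^ 2)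
  rw [abs_mul, abs_pow, abs_of_pos (Real.exp_pos _)]

lemma integrable_poly_gauss (n : ℕ) :
    Integrable (fun x : ℝ => (1 + |x|) ^ n * ARC.gauss x) := by
  have key : Integrable (fun x : ℝ => ∑ k ∈ Finset.range (n+1),
      (n.choose k : ℝ) * (|x| ^ k * Real.exp (-(1/2) * x ^ 2))) :=
    integrable_finset_sum _ fun k _ => (integrable_abs_pow_gauss k).const_mul _
  refine (key.const_mul ((Real.sqrt (2 * Real.pi))⁻¹)).congr
    (Filter.Eventually.of_forall fun x => ?_)
  show (Real.sqrt (2 * Real.pi))⁻¹ * ∑ k ∈ Finset.range (n+1),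
      (n.choose k : ℝ) * (|x| ^ k * Real.exp (-(1/2) * x ^ 2)) = (1 + |x|) ^ n * ARC.gauss x
  have hb : (1 + |x|) ^ n = ∑ k ∈ Finset.range (n+1), (n.choose k : ℝ) * |x| ^ k := by
    rw [add_comm (1:ℝ) (|x|), add_pow]
    exact Finset.sum_congr rfl fun k _ => by ring
  rw [hb, Finset.sum_mul, Finset.mul_sum]
  exact Finset.sum_congr rfl fun k _ => by rw [gauss_eq]; ring

lemma integrable_pg_gauss {q : ℝ → ℝ} (hq : Continuous q) {C : ℝ} {n : ℕ} (h : PG C n q) :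
    Integrable (fun x => q x * ARC.gauss x) := by
  refine ((integrable_poly_gauss n).const_mul C).mono'
    ((hq.mul continuous_gauss).aestronglyMeasurable) (Filter.Eventually.of_forall fun x => ?_)
  rw [Real.norm_eq_abs, abs_mul, abs_of_nonneg (gauss_nonneg x)]
  calc |q x| * ARC.gauss x ≤ (C * (1 + |x|) ^ n) * ARC.gauss x :=
        mul_le_mul_of_nonneg_right (h x) (gauss_nonneg x)
    _ = C * ((1 + |x|) ^ n * ARC.gauss x) := by ring

lemma pg_comp_affine {q : ℝ → ℝ} {C : ℝ} {n : ℕ} (h : PG C n q) (t a : ℝ) :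
    PG (C * ((1 + |t|) * (1 + |a|)) ^ n) n (fun x => q (t + a * x)) := by
  intro x
  have hC := h.nonnegC
  calc |q (t + a * x)| ≤ C * (1 + |t + a * x|) ^ n := h _
    _ ≤ C * ((1 + |t|) * (1 + |a|) * (1 + |x|)) ^ n := by
        refine mul_le_mul_of_nonneg_left (pow_le_pow_left₀ (by positivity) ?_ n) hC
        have h1 : |t + a * x| ≤ |t| + |a| * |x| := by
          calc |t + a * x| ≤ |t| + |a * x| := abs_add_le _ _
            _ = |t| + |a| * |x| := by rw [abs_mul]
        nlinarith [h1, abs_nonneg t, abs_nonneg a, abs_nonneg x,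
          mul_nonneg (abs_nonneg t) (abs_nonneg a), mul_nonneg (abs_nonneg t) (abs_nonneg x),
          mul_nonneg (abs_nonneg a) (abs_nonneg x),
          mul_nonneg (mul_nonneg (abs_nonneg t) (abs_nonneg a)) (abs_nonneg x)]
    _ = C * ((1 + |t|) * (1 + |a|)) ^ n * (1 + |x|) ^ n := by rw [mul_pow]; ring

lemma tendsto_exp_bound (n : ℕ) :
    Tendsto (fun y : ℝ => (1 + y) ^ n * Real.exp (-(1/2) * y ^ 2)) atTop (𝓝 0) := by
  have h1 : Tendsto (fun y : ℝ => Real.exp (3/2) * ((1 + y) ^ n * Real.exp (-(1 + y))))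
      atTop (𝓝 0) := by
    have h2 : Tendsto (fun y : ℝ => (1 + y)) atTop atTop :=
      tendsto_atTop_add_const_left _ 1 tendsto_id
    have h3 := (Real.tendsto_pow_mul_exp_neg_atTop_nhds_zero n).comp h2
    simpa using h3.const_mul (Real.exp (3/2))
  refine squeeze_zero' ?_ ?_ h1
  · filter_upwards [eventually_ge_atTop (0:ℝ)] with y hy
    positivity
  · filter_upwards [eventually_ge_atTop (0:ℝ)] with y hy
    have hexp : Real.exp (-(1/2) * y ^ 2) ≤ Real.exp (3/2) * Real.exp (-(1 + y)) := by
      rw [← Real.exp_add]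
      exact Real.exp_le_exp.2 (by nlinarith [sq_nonneg (y - 1)])
    calc (1 + y) ^ n * Real.exp (-(1/2) * y ^ 2)
        ≤ (1 + y) ^ n * (Real.exp (3/2) * Real.exp (-(1 + y))) :=
          mul_le_mul_of_nonneg_left hexp (by positivity)
      _ = Real.exp (3/2) * ((1 + y) ^ n * Real.exp (-(1 + y))) := by ring

lemma tendsto_pg_gauss {f : ℝ → ℝ} {C : ℝ} {n : ℕ} (h : PG C n f) {l : Filter ℝ}
    (hl : Tendsto (fun x : ℝ => |x|) l atTop) :
    Tendsto (fun x => f x * ARC.gauss x) l (𝓝 0) := by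
  have hC := h.nonnegC
  refine squeeze_zero_norm (a := fun x => (C * (Real.sqrt (2 * Real.pi))⁻¹) *
    ((1 + |x|) ^ n * Real.exp (-(1/2) * |x| ^ 2))) (fun x => ?_) ?_
  · rw [Real.norm_eq_abs, abs_mul, abs_of_nonneg (gauss_nonneg x)]
    have hg : ARC.gauss x = (Real.sqrt (2 * Real.pi))⁻¹ * Real.exp (-(1/2) * |x| ^ 2) := by
      rw [gauss_eq, sq_abs]
    calc |f x| * ARC.gauss x ≤ (C * (1 + |x|) ^ n) * ARC.gauss x :=
          mul_le_mul_of_nonneg_right (h x) (gauss_nonneg x)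
      _ = (C * (Real.sqrt (2 * Real.pi))⁻¹) * ((1 + |x|) ^ n * Real.exp (-(1/2) * |x| ^ 2)) := by
          rw [hg]; ring
  · have h2 := (tendsto_exp_bound n).comp hl
    have h3 := h2.const_mul (C * (Real.sqrt (2 * Real.pi))⁻¹)
    simpa [Function.comp] using h3

lemma hasDerivAt_gauss_param {q q' : ℝ → ℝ} (hq : ∀ x, HasDerivAt q (q' x) x)
    (hq'c : Continuous q') {C C' : ℝ} {n n' : ℕ} (h0 : PG C n q) (h1 : PG C' n' q')
    (a t : ℝ) :
    HasDerivAt (fun u => ∫ x, q (u + a * x) * ARC.gauss x)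
      (∫ x, q' (t + a * x) * ARC.gauss x) t := by
  have hqc : Continuous q := by
    have : Differentiable ℝ q := fun x => (hq x).differentiableAt
    exact this.continuous
  have key := hasDerivAt_integral_of_dominated_loc_of_deriv_le (μ := volume)
    (F := fun u x => q (u + a * x) * ARC.gauss x)
    (F' := fun u x => q' (u + a * x) * ARC.gauss x) (x₀ := t)
    (bound := fun x => (C' * ((2 + |t|) * (1 + |a|)) ^ n') * ((1 + |x|) ^ n' * ARC.gauss x))
    (Metric.ball_mem_nhds t one_pos)
    (Filter.Eventually.of_forall fun u =>
      ((hqc.comp (continuous_const.add (continuous_const.mul continuous_id))).mul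
        continuous_gauss).aestronglyMeasurable)
    (integrable_pg_gauss (hqc.comp (continuous_const.add (continuous_const.mul continuous_id)))
      (pg_comp_affine h0 t a))
    (((hq'c.comp (continuous_const.add (continuous_const.mul continuous_id))).mul
        continuous_gauss).aestronglyMeasurable)
    (Filter.Eventually.of_forall fun x u hu => ?_)
    (((integrable_poly_gauss n').const_mul _))
    (Filter.Eventually.of_forall fun x u hu => ?_)
  · exact key.2
  · -- bound
    rw [Real.norm_eq_abs, abs_mul, abs_of_nonneg (gauss_nonneg x)]
    have hC' := h1.nonnegC
    have hb1 := pg_comp_affine h1 u a x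
    have hu1 : 1 + |u| ≤ 2 + |t| := by
      have : |u - t| < 1 := by simpa [Real.dist_eq] using Metric.mem_ball.1 hu
      have h2 : |u| ≤ |u - t| + |t| := by
        calc |u| = |(u - t) + t| := by ring_nf
          _ ≤ |u - t| + |t| := abs_add_le _ _
      linarith
    have hb2 : |q' (u + a * x)| ≤ C' * ((2 + |t|) * (1 + |a|)) ^ n' * (1 + |x|) ^ n' := by
      refine hb1.trans ?_
      have : C' * ((1 + |u|) * (1 + |a|)) ^ n' ≤ C' * ((2 + |t|) * (1 + |a|)) ^ n' := by
        refine mul_le_mul_of_nonneg_left (pow_le_pow_left₀ (by positivity) ?_ n') hC'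
        have : (0:ℝ) ≤ 1 + |a| := by positivity
        nlinarith [abs_nonneg a]
      exact mul_le_mul_of_nonneg_right this (by positivity)
    calc |q' (u + a * x)| * ARC.gauss x
        ≤ (C' * ((2 + |t|) * (1 + |a|)) ^ n' * (1 + |x|) ^ n') * ARC.gauss x :=
          mul_le_mul_of_nonneg_right hb2 (gauss_nonneg x)
      _ = (C' * ((2 + |t|) * (1 + |a|)) ^ n') * ((1 + |x|) ^ n' * ARC.gauss x) := by ring
  · -- differentiability
    have hinner : HasDerivAt (fun u : ℝ => u + a * x) 1 u := (hasDerivAt_id u).add_const _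
    have := ((hq (u + a * x)).comp u hinner).mul_const (ARC.gauss x)
    simpa using this

lemma integral_mul_id_gauss {g g' : ℝ → ℝ} (hg : ∀ x, HasDerivAt g (g' x) x)
    (hg'c : Continuous g') {C C' : ℝ} {n n' : ℕ} (h0 : PG C n g) (h1 : PG C' n' g') :
    ∫ x, g x * x * ARC.gauss x = ∫ x, g' x * ARC.gauss x := by
  have hgd : Differentiable ℝ g := fun x => (hg x).differentiableAt
  have hgc : Continuous g := hgd.continuous
  have hH : ∀ x, HasDerivAt (fun x => g x * ARC.gauss x)
      (g' x * ARC.gauss x - g x * x * ARC.gauss x) x := by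
    intro x
    have := (hg x).mul (hasDerivAt_gauss x)
    refine this.congr_deriv ?_
    ring
  have I1 : Integrable (fun x => g' x * ARC.gauss x) := integrable_pg_gauss hg'c h1
  have I2 : Integrable (fun x => g x * x * ARC.gauss x) := by
    refine integrable_pg_gauss (by fun_prop) (C := C) (n := n + 1) fun x => ?_
    have hC := h0.nonnegC
    calc |g x * x| = |g x| * |x| := abs_mul _ _
      _ ≤ (C * (1 + |x|) ^ n) * (1 + |x|) :=
          mul_le_mul (h0 x) (by linarith [abs_nonneg x]) (abs_nonneg x) (by positivity)
      _ = C * (1 + |x|) ^ (n + 1) := by rw [pow_succ]; ring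
  have I3 : Integrable (fun x => g' x * ARC.gauss x - g x * x * ARC.gauss x) := I1.sub I2
  have htop : Tendsto (fun x => g x * ARC.gauss x) atTop (𝓝 0) :=
    tendsto_pg_gauss h0 tendsto_abs_atTop_atTop
  have hbot : Tendsto (fun x => g x * ARC.gauss x) atBot (𝓝 0) :=
    tendsto_pg_gauss h0 tendsto_abs_atBot_atTop
  have e1 := integral_Iic_of_hasDerivAt_of_tendsto' (a := (0:ℝ)) (fun x _ => hH x)
    I3.integrableOn hbot
  have e2 := integral_Ioi_of_hasDerivAt_of_tendsto' (a := (0:ℝ)) (fun x _ => hH x)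
    I3.integrableOn htop
  have e3 : ∫ x, (g' x * ARC.gauss x - g x * x * ARC.gauss x) = 0 := by
    rw [← intervalIntegral.integral_Iic_add_Ioi I3.integrableOn I3.integrableOn, e1, e2]
    ring
  have e4 := integral_sub I1 I2
  rw [e4] at e3
  linarith

lemma hasDerivAt_gauss_param_sqrt {q q' : ℝ → ℝ} (hq : ∀ x, HasDerivAt q (q' x) x)
    (hq'c : Continuous q') {C C' : ℝ} {n n' : ℕ} (h0 : PG C n q) (h1 : PG C' n' q')
    (t c u₀ : ℝ) (hu : 0 < u₀ + c) :
    HasDerivAt (fun u => ∫ x, q (t + Real.sqrt (u + c) * x) * ARC.gauss x)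
      (∫ x, q' (t + Real.sqrt (u₀ + c) * x) * (x / (2 * Real.sqrt (u₀ + c))) * ARC.gauss x)
      u₀ := by
  have hqd : Differentiable ℝ q := fun x => (hq x).differentiableAt
  have hqc : Continuous q := hqd.continuous
  set ε : ℝ := (u₀ + c) / 2 with hε
  have hεpos : 0 < ε := by positivity
  set A : ℝ := Real.sqrt (2 * (u₀ + c)) with hA
  have hApos : 0 < A := Real.sqrt_pos.2 (by linarith)
  set B : ℝ := (2 * Real.sqrt ε)⁻¹ with hB
  have hBpos : 0 < B := by
    rw [hB]
    positivity
  have hball : ∀ u ∈ Metric.ball u₀ ε, 0 < u + c ∧ Real.sqrt (u + c) ≤ A ∧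
      (2 * Real.sqrt (u + c))⁻¹ ≤ B := by
    intro u hu'
    have hd : |u - u₀| < ε := by simpa [Real.dist_eq] using Metric.mem_ball.1 hu'
    have h5 : u + c > ε := by
      cases' abs_lt.1 hd with h6 h7
      rw [hε] at *
      linarith
    refine ⟨by linarith, ?_, ?_⟩
    · exact Real.sqrt_le_sqrt (by cases' abs_lt.1 hd with h6 h7; rw [hε] at h7; linarith)
    · rw [hB]
      have h8 : Real.sqrt ε ≤ Real.sqrt (u + c) := Real.sqrt_le_sqrt (le_of_lt h5)
      have h9 : 0 < Real.sqrt ε := Real.sqrt_pos.2 hεpos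
      exact inv_anti₀ (by linarith) (by linarith)
  have key := hasDerivAt_integral_of_dominated_loc_of_deriv_le (μ := volume)
    (F := fun u x => q (t + Real.sqrt (u + c) * x) * ARC.gauss x)
    (F' := fun u x => q' (t + Real.sqrt (u + c) * x) * (x / (2 * Real.sqrt (u + c))) *
      ARC.gauss x) (x₀ := u₀)
    (bound := fun x => (C' * ((1 + |t|) * (1 + A)) ^ n' * B) *
      ((1 + |x|) ^ (n' + 1) * ARC.gauss x))
    (Metric.ball_mem_nhds u₀ hεpos)
    (Filter.Eventually.of_forall fun u => by
      exact ((hqc.comp (continuous_const.add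
        (continuous_const.mul continuous_id))).mul continuous_gauss).aestronglyMeasurable)
    (by
      refine integrable_pg_gauss ?_ (pg_comp_affine h0 t (Real.sqrt (u₀ + c)))
      exact hqc.comp (continuous_const.add (continuous_const.mul continuous_id)))
    (by
      apply Continuous.aestronglyMeasurable
      have hc1 : Continuous fun x : ℝ => q' (t + Real.sqrt (u₀ + c) * x) :=
        hq'c.comp (continuous_const.add (continuous_const.mul continuous_id))
      have hc2 : Continuous fun x : ℝ => x / (2 * Real.sqrt (u₀ + c)) :=
        continuous_id.div_const _
      exact (hc1.mul hc2).mul continuous_gauss)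
    (Filter.Eventually.of_forall fun x u hu' => ?_)
    (((integrable_poly_gauss (n' + 1)).const_mul _))
    (Filter.Eventually.of_forall fun x u hu' => ?_)
  · exact key.2
  · -- bound
    obtain ⟨hpos, hAle, hBle⟩ := hball u hu'
    have hC' := h1.nonnegC
    rw [Real.norm_eq_abs, abs_mul, abs_mul, abs_of_nonneg (gauss_nonneg x)]
    have hb1 := pg_comp_affine h1 t (Real.sqrt (u + c)) x
    have hsn : 0 ≤ Real.sqrt (u + c) := Real.sqrt_nonneg _
    have hb2 : |q' (t + Real.sqrt (u + c) * x)| ≤ C' * ((1 + |t|) * (1 + A)) ^ n' *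
        (1 + |x|) ^ n' := by
      refine hb1.trans (mul_le_mul_of_nonneg_right ?_ (by positivity))
      refine mul_le_mul_of_nonneg_left (pow_le_pow_left₀ (by positivity) ?_ n') hC'
      have h10 : |Real.sqrt (u + c)| = Real.sqrt (u + c) := abs_of_nonneg hsn
      have h11 : (0:ℝ) ≤ 1 + |t| := by positivity
      nlinarith [abs_nonneg t]
    have hb3 : |x / (2 * Real.sqrt (u + c))| ≤ B * (1 + |x|) := by
      rw [abs_div]
      have h12 : 0 < 2 * Real.sqrt (u + c) := by
        have := Real.sqrt_pos.2 hpos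
        linarith
      rw [abs_of_pos h12, div_eq_mul_inv]
      calc |x| * (2 * Real.sqrt (u + c))⁻¹ ≤ (1 + |x|) * B := by
            refine mul_le_mul (by linarith [abs_nonneg x]) hBle (by positivity) (by positivity)
        _ = B * (1 + |x|) := mul_comm _ _
    calc |q' (t + Real.sqrt (u + c) * x)| * |x / (2 * Real.sqrt (u + c))| * ARC.gauss x
        ≤ (C' * ((1 + |t|) * (1 + A)) ^ n' * (1 + |x|) ^ n') * (B * (1 + |x|)) *
          ARC.gauss x := by
          refine mul_le_mul_of_nonneg_right (mul_le_mul hb2 hb3 (abs_nonneg _) (by positivity))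
            (gauss_nonneg x)
      _ = (C' * ((1 + |t|) * (1 + A)) ^ n' * B) * ((1 + |x|) ^ (n' + 1) * ARC.gauss x) := by
          rw [pow_succ]; ring
  · -- differentiability
    obtain ⟨hpos, -, -⟩ := hball u hu'
    have h2 : HasDerivAt Real.sqrt (1 / (2 * Real.sqrt (u + c))) (u + c) :=
      Real.hasDerivAt_sqrt (ne_of_gt hpos)
    have h3 : HasDerivAt (fun u : ℝ => Real.sqrt (u + c)) (1 / (2 * Real.sqrt (u + c))) u := by
      have := h2.comp u ((hasDerivAt_id u).add_const c)
      exact this.congr_deriv (mul_one _)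
    have h4 := ((h3.mul_const x).const_add t)
    have h5 := ((hq (t + Real.sqrt (u + c) * x)).comp u h4).mul_const (ARC.gauss x)
    refine h5.congr_deriv ?_
    field_simp

end ARCAux
end

set_option maxHeartbeats 2000000 in
/-- Lemma A.5: explicit learning premium for the Gaussian bandit with additional
information: `L^λ_i(m,d) = (2λ)⁻¹ ∑_j η^λ_{jj}(f(m,d)) d_{jj}² (s_{ij}/(1+d_{jj}s_{ij})) g_j²`. -/
theorem ARC.L_additional_information
    {K : ℕ} (hK : 0 < K)
    (S : (Fin K → ℝ) → ℝ) (hS : ARC.IsSmoothMax hK S)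
    (m : Fin K → ℝ) (d : Fin K → Fin K → ℝ)
    (hdiag : ∀ k l, k ≠ l → d k l = 0) (hdpos : ∀ k, 0 < d k k)
    (s : Fin K → Fin K → ℝ) (hs : ∀ i j, 0 ≤ s i j) (hsdiag : ∀ j, 0 < s j j)
    (rf : Fin K → ℝ → ℝ) (hrf : ∀ i, ContDiff ℝ 2 (rf i))
    (hgrowth : ∀ i, ARC.PolyGrowth2 (rf i))
    (f : Fin K → (Fin K → ℝ) → (Fin K → Fin K → ℝ) → ℝ)
    (hfdef : f = fun i m' d' => ∫ x : ℝ,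
      rf i (m' i + Real.sqrt (d' i i + (s i i)⁻¹) * x) * ARC.gauss x)
    (μ : Fin K → (Fin K → ℝ) → (Fin K → Fin K → ℝ) → Fin K → ℝ)
    (b ssT : Fin K → (Fin K → ℝ) → (Fin K → Fin K → ℝ) → Fin K → Fin K → ℝ)
    (hμ : μ = fun _ _ _ => 0)
    (hb : b = fun i _ d' k l =>
      if k = l then -(d' k k ^ 2 * (s i k / (1 + d' k k * s i k))) else 0)
    (hssT : ssT = fun i m' d' k l => -(b i m' d' k l)) :
    ∀ (i : Fin K) (lam : ℝ), 0 < lam →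
      ARC.Lmat (ARC.nu S lam) (ARC.eta S lam) lam f μ b ssT m d i =
        (1 / (2 * lam)) * ∑ j,
          ARC.eta S lam (fun j' => f j' m d) j j * d j j ^ 2 *
            (s i j / (1 + d j j * s i j)) *
            (∫ x : ℝ, deriv (rf j) (m j + Real.sqrt (d j j + (s j j)⁻¹) * x) *
              ARC.gauss x) ^ 2 := by
  intro i lam hlam
  subst hμ hssT hb
  have hapos : ∀ j : Fin K, 0 < d j j + (s j j)⁻¹ :=
    fun j => add_pos (hdpos j) (inv_pos.2 (hsdiag j))
  -- analytic facts for each coordinate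
  have hfacts : ∀ j : Fin K,
      (∀ t : ℝ, HasDerivAt
        (fun u => ∫ x, rf j (u + Real.sqrt (d j j + (s j j)⁻¹) * x) * ARC.gauss x)
        (∫ x, deriv (rf j) (t + Real.sqrt (d j j + (s j j)⁻¹) * x) * ARC.gauss x) t) ∧
      (∀ t : ℝ, HasDerivAt
        (fun u => ∫ x, deriv (rf j) (u + Real.sqrt (d j j + (s j j)⁻¹) * x) * ARC.gauss x)
        (∫ x, deriv (deriv (rf j)) (t + Real.sqrt (d j j + (s j j)⁻¹) * x) * ARC.gauss x) t) ∧
      HasDerivAt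
        (fun u => ∫ x, rf j (m j + Real.sqrt (u + (s j j)⁻¹) * x) * ARC.gauss x)
        ((1/2) * ∫ x, deriv (deriv (rf j)) (m j + Real.sqrt (d j j + (s j j)⁻¹) * x) *
          ARC.gauss x)
        (d j j) := by
    intro j
    obtain ⟨C, n, hCn⟩ := hgrowth j
    have PG0 : ARCAux.PG C n (rf j) := fun x => (hCn x).1
    have PG1 : ARCAux.PG C n (deriv (rf j)) := fun x => (hCn x).2.1
    have PG2 : ARCAux.PG C n (deriv (deriv (rf j))) := fun x => (hCn x).2.2
    have hD1 : ∀ x, HasDerivAt (rf j) (deriv (rf j) x) x :=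
      fun x => ((hrf j).differentiable (by norm_num) x).hasDerivAt
    have h2 : ContDiff ℝ ((1 : WithTop ℕ∞) + 1) (rf j) := by
      have he : ((1 : WithTop ℕ∞) + 1) = 2 := by norm_num
      rw [he]; exact hrf j
    have hC1 : ContDiff ℝ 1 (deriv (rf j)) := (contDiff_succ_iff_deriv.mp h2).2.2
    have hD2 : ∀ x, HasDerivAt (deriv (rf j)) (deriv (deriv (rf j)) x) x :=
      fun x => (hC1.differentiable one_ne_zero x).hasDerivAt
    have hc1 : Continuous (deriv (rf j)) := hC1.continuous
    have hc2 : Continuous (deriv (deriv (rf j))) := hC1.continuous_deriv le_rfl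
    refine ⟨fun t => ARCAux.hasDerivAt_gauss_param hD1 hc1 PG0 PG1 _ t,
      fun t => ARCAux.hasDerivAt_gauss_param hD2 hc2 PG1 PG2 _ t, ?_⟩
    have hkeyD := ARCAux.hasDerivAt_gauss_param_sqrt hD1 hc1 PG0 PG1 (m j) ((s j j)⁻¹)
      (d j j) (hapos j)
    have hibp : (∫ x, deriv (rf j) (m j + Real.sqrt (d j j + (s j j)⁻¹) * x) *
        (x / (2 * Real.sqrt (d j j + (s j j)⁻¹))) * ARC.gauss x)
        = (1/2) * ∫ x, deriv (deriv (rf j)) (m j + Real.sqrt (d j j + (s j j)⁻¹) * x) *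
          ARC.gauss x := by
      set a := Real.sqrt (d j j + (s j j)⁻¹) with ha
      have hapos' : 0 < a := Real.sqrt_pos.2 (hapos j)
      have hQ : ∀ x, HasDerivAt (fun x => deriv (rf j) (m j + a * x))
          (deriv (deriv (rf j)) (m j + a * x) * a) x := by
        intro x
        have hin : HasDerivAt (fun x : ℝ => m j + a * x) a x := by
          simpa using ((hasDerivAt_id x).const_mul a).const_add (m j)
        exact (hD2 (m j + a * x)).comp x hin
      have hQc : Continuous (fun x => deriv (deriv (rf j)) (m j + a * x) * a) :=
        (hc2.comp (continuous_const.add (continuous_const.mul continuous_id))).mul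
          continuous_const
      have PGQ' : ARCAux.PG (C * ((1 + |m j|) * (1 + |a|)) ^ n * |a|) n
          (fun x => deriv (deriv (rf j)) (m j + a * x) * a) := by
        intro x
        rw [abs_mul]
        calc |deriv (deriv (rf j)) (m j + a * x)| * |a|
            ≤ (C * ((1 + |m j|) * (1 + |a|)) ^ n * (1 + |x|) ^ n) * |a| :=
              mul_le_mul_of_nonneg_right (ARCAux.pg_comp_affine PG2 (m j) a x) (abs_nonneg a)
          _ = C * ((1 + |m j|) * (1 + |a|)) ^ n * |a| * (1 + |x|) ^ n := by ring
      have hibp0 := ARCAux.integral_mul_id_gauss hQ hQc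
        (ARCAux.pg_comp_affine PG1 (m j) a) PGQ'
      have lhs_eq : ∀ x : ℝ, deriv (rf j) (m j + a * x) * (x / (2 * a)) * ARC.gauss x
          = (2 * a)⁻¹ * (deriv (rf j) (m j + a * x) * x * ARC.gauss x) := by
        intro x; rw [div_eq_mul_inv]; ring
      have rhs_eq : ∀ x : ℝ, (deriv (deriv (rf j)) (m j + a * x) * a) * ARC.gauss x
          = a * (deriv (deriv (rf j)) (m j + a * x) * ARC.gauss x) := by
        intro x; ring
      calc (∫ x, deriv (rf j) (m j + a * x) * (x / (2 * a)) * ARC.gauss x)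
          = ∫ x, (2 * a)⁻¹ * (deriv (rf j) (m j + a * x) * x * ARC.gauss x) := by
            simp only [lhs_eq]
        _ = (2 * a)⁻¹ * ∫ x, deriv (rf j) (m j + a * x) * x * ARC.gauss x :=
            integral_const_mul _ _
        _ = (2 * a)⁻¹ * ∫ x, (deriv (deriv (rf j)) (m j + a * x) * a) * ARC.gauss x := by
            rw [hibp0]
        _ = (2 * a)⁻¹ * ∫ x, a * (deriv (deriv (rf j)) (m j + a * x) * ARC.gauss x) := by
            simp only [rhs_eq]
        _ = (2 * a)⁻¹ * (a * ∫ x, deriv (deriv (rf j)) (m j + a * x) * ARC.gauss x) := by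
            rw [integral_const_mul]
        _ = (1/2) * ∫ x, deriv (deriv (rf j)) (m j + a * x) * ARC.gauss x := by
            rw [← mul_assoc]
            congr 1
            field_simp
    rw [hibp] at hkeyD
    exact hkeyD
  -- the gradient in m
  have hgradM : ∀ j k : Fin K, ARC.gradMm f j m d k =
      (if j = k then
        ∫ x, deriv (rf j) (m j + Real.sqrt (d j j + (s j j)⁻¹) * x) * ARC.gauss x else 0) := by
    intro j k
    show fderiv ℝ (fun m' => f j m' d) m (Pi.single k 1) = _
    have hfj : (fun m' : Fin K → ℝ => f j m' d) = fun m' : Fin K → ℝ =>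
        ∫ x, rf j (m' j + Real.sqrt (d j j + (s j j)⁻¹) * x) * ARC.gauss x := by
      rw [hfdef]
    rw [hfj]
    have hF : HasFDerivAt (fun m' : Fin K → ℝ =>
        ∫ x, rf j (m' j + Real.sqrt (d j j + (s j j)⁻¹) * x) * ARC.gauss x)
        ((∫ x, deriv (rf j) (m j + Real.sqrt (d j j + (s j j)⁻¹) * x) * ARC.gauss x) •
          (ContinuousLinearMap.proj j : ((Fin K) → ℝ) →L[ℝ] ℝ)) m :=
      by have := HasDerivAt.comp_hasFDerivAt m ((hfacts j).1 (m j)) ((ContinuousLinearMap.proj j : ((Fin K) → ℝ) →L[ℝ] ℝ).hasFDerivAt); exact this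
    rw [hF.fderiv]
    by_cases h : j = k
    · subst h
      simp
    · simp [Pi.single_eq_of_ne h, h]
  -- the Hessian in m
  have hhess : ∀ j k l : Fin K, ARC.hessMm f j m d k l =
      (if j = k then (if j = l then
        ∫ x, deriv (deriv (rf j)) (m j + Real.sqrt (d j j + (s j j)⁻¹) * x) * ARC.gauss x
        else 0) else 0) := by
    intro j k l
    show fderiv ℝ (fun m' => fderiv ℝ (fun m'' => f j m'' d) m' (Pi.single l 1)) m
      (Pi.single k 1) = _
    have hinner : (fun m' : Fin K → ℝ => fderiv ℝ (fun m'' => f j m'' d) m' (Pi.single l 1))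
        = fun m' : Fin K → ℝ => ((Pi.single l 1 : Fin K → ℝ) j) *
          ∫ x, deriv (rf j) (m' j + Real.sqrt (d j j + (s j j)⁻¹) * x) * ARC.gauss x := by
      funext m'
      have hfj : (fun m'' : Fin K → ℝ => f j m'' d) = fun m'' : Fin K → ℝ =>
          ∫ x, rf j (m'' j + Real.sqrt (d j j + (s j j)⁻¹) * x) * ARC.gauss x := by
        rw [hfdef]
      rw [hfj]
      have hF : HasFDerivAt (fun m'' : Fin K → ℝ =>
          ∫ x, rf j (m'' j + Real.sqrt (d j j + (s j j)⁻¹) * x) * ARC.gauss x)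
          ((∫ x, deriv (rf j) (m' j + Real.sqrt (d j j + (s j j)⁻¹) * x) * ARC.gauss x) •
            (ContinuousLinearMap.proj j : ((Fin K) → ℝ) →L[ℝ] ℝ)) m' :=
        by have := HasDerivAt.comp_hasFDerivAt m' ((hfacts j).1 (m' j)) ((ContinuousLinearMap.proj j : ((Fin K) → ℝ) →L[ℝ] ℝ).hasFDerivAt); exact this
      rw [hF.fderiv]
      simp [mul_comm]
    rw [hinner]
    have hF2 : HasFDerivAt (fun m' : Fin K → ℝ => ((Pi.single l 1 : Fin K → ℝ) j) *
        ∫ x, deriv (rf j) (m' j + Real.sqrt (d j j + (s j j)⁻¹) * x) * ARC.gauss x)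
        (((Pi.single l 1 : Fin K → ℝ) j) •
          ((∫ x, deriv (deriv (rf j)) (m j + Real.sqrt (d j j + (s j j)⁻¹) * x) * ARC.gauss x) •
            (ContinuousLinearMap.proj j : ((Fin K) → ℝ) →L[ℝ] ℝ))) m :=
      (HasDerivAt.comp_hasFDerivAt m ((hfacts j).2.1 (m j))
        ((ContinuousLinearMap.proj j : ((Fin K) → ℝ) →L[ℝ] ℝ).hasFDerivAt)).const_mul _
    rw [hF2.fderiv]
    by_cases hjk : j = k <;> by_cases hjl : j = l
    · subst hjk; subst hjl; simp [mul_comm]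
    · subst hjk
      simp [Pi.single_eq_of_ne (fun h => hjl h.symm), hjl]
    · subst hjl
      simp [Pi.single_eq_of_ne hjk, hjk]
    · simp [Pi.single_eq_of_ne hjk, hjk]
  -- the gradient in d
  have hgradD : ∀ j k l : Fin K, ARC.gradDm f j m d k l =
      (if j = k then (if j = l then (1/2) *
        ∫ x, deriv (deriv (rf j)) (m j + Real.sqrt (d j j + (s j j)⁻¹) * x) * ARC.gauss x
        else 0) else 0) := by
    intro j k l
    show fderiv ℝ (fun d' => f j m d') d (Pi.single k (Pi.single l 1)) = _
    have hfj : (fun d' : Fin K → Fin K → ℝ => f j m d') = fun d' : Fin K → Fin K → ℝ =>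
        ∫ x, rf j (m j + Real.sqrt (d' j j + (s j j)⁻¹) * x) * ARC.gauss x := by
      rw [hfdef]
    rw [hfj]
    have hF : HasFDerivAt (fun d' : Fin K → Fin K → ℝ =>
        ∫ x, rf j (m j + Real.sqrt (d' j j + (s j j)⁻¹) * x) * ARC.gauss x)
        (((1/2) * ∫ x, deriv (deriv (rf j)) (m j + Real.sqrt (d j j + (s j j)⁻¹) * x) *
            ARC.gauss x) •
          ((ContinuousLinearMap.proj j : ((Fin K) → ℝ) →L[ℝ] ℝ).comp
            (ContinuousLinearMap.proj j : ((Fin K) → (Fin K) → ℝ) →L[ℝ] ((Fin K) → ℝ)))) d :=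
      by have := HasDerivAt.comp_hasFDerivAt d ((hfacts j).2.2)
          (((ContinuousLinearMap.proj j : ((Fin K) → ℝ) →L[ℝ] ℝ).comp
            (ContinuousLinearMap.proj j : ((Fin K) → (Fin K) → ℝ) →L[ℝ] ((Fin K) → ℝ))).hasFDerivAt); exact this
    rw [hF.fderiv]
    by_cases hjk : j = k <;> by_cases hjl : j = l
    · subst hjk; subst hjl; simp
    · subst hjk
      simp [Pi.single_eq_of_ne (fun h => hjl h.symm), hjl]
    · subst hjl
      simp [Pi.single_eq_of_ne hjk, hjk]
    · simp [Pi.single_eq_of_ne hjk, hjk]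
  -- assemble
  have key1 : ∀ (F : Fin K → Fin K → ℝ) (c : Fin K → ℝ),
      (∑ k, ∑ l, F k l * (if k = l then c k else 0)) = ∑ k, F k k * c k := by
    intro F c
    refine Finset.sum_congr rfl fun k _ => ?_
    rw [Finset.sum_eq_single k]
    · simp
    · intro l _ hlk
      rw [if_neg (fun h => hlk h.symm), mul_zero]
    · intro h; exact absurd (Finset.mem_univ k) h
  have key2 : ∀ (N X : Fin K → ℝ) (k : Fin K),
      (∑ j, N j * (if j = k then (if j = k then X j else 0) else 0)) = N k * X k := by
    intro N X k
    rw [Finset.sum_eq_single k]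
    · simp
    · intro j _ hjk
      rw [if_neg hjk, mul_zero]
    · intro h; exact absurd (Finset.mem_univ k) h
  have key3 : ∀ (G : Fin K → ℝ) (EE : Fin K → Fin K → ℝ) (k : Fin K),
      (∑ j, ∑ j', EE j j' * (if j = k then G j else 0) * (if j' = k then G j' else 0))
        = EE k k * G k * G k := by
    intro G EE k
    rw [Finset.sum_eq_single k]
    · rw [Finset.sum_eq_single k]
      · simp
      · intro j' _ hj'k
        rw [if_neg hj'k, mul_zero]
      · intro h; exact absurd (Finset.mem_univ k) h
    · intro j _ hjk
      rw [Finset.sum_eq_single k]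
      · rw [if_neg hjk, mul_zero, zero_mul]
      · intro j' _ hj'k
        rw [if_neg hj'k, mul_zero]
      · intro h; exact absurd (Finset.mem_univ k) h
    · intro h; exact absurd (Finset.mem_univ k) h
  have hnegneg : ∀ k l : Fin K,
      -(if k = l then -(d k k ^ 2 * (s i k / (1 + d k k * s i k))) else 0)
        = (if k = l then d k k ^ 2 * (s i k / (1 + d k k * s i k)) else 0) := by
    intro k l
    split <;> ring
  unfold ARC.Lmat
  simp only [hgradM, hhess, hgradD, Pi.zero_apply, mul_zero, Finset.sum_const_zero, add_zero]
  simp only [hnegneg]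
  rw [key1, key1]
  simp only [key2, key3]
  rw [Finset.mul_sum, Finset.mul_sum, ← Finset.sum_add_distrib]
  refine Finset.sum_congr rfl fun k _ => ?_
  have hlam' : lam ≠ 0 := ne_of_gt hlam
  have hden : (1 : ℝ) + d k k * s i k ≠ 0 := by
    have := mul_nonneg (le_of_lt (hdpos k)) (hs i k)
    positivity
  field_simp
  ring
end
end
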